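/- There is a bijection between the set of trees on [n] rooted at 1 whose set of leaves is exactly L (where |L| = k, 2 ≤ k ≤ n-1, and leaves are computed in the underlying undirected tree) and the set of ordered set partitions of {2,...,n-1} into n-k nonempty parts. -/

import Mathlib

open Function SimpleGraph

noncomputable section

set_option linter.unusedSectionVars false

def Sur (m j : ℕ) : ℕ := Nat.card {f : Fin m → Fin j // Function.Surjective f}

def surCongr {α β γ δ : Type*} (e : α ≃ β) (e' : γ ≃ δ) :
    {f : α → γ // Surjective f} ≃ {f : β → δ // Surjective f} :=
  Equiv.subtypeEquiv (Equiv.arrowCongr e e') (by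
    intro f
    constructor
    · intro hf
      simpa [Equiv.arrowCongr] using (e'.surjective.comp hf).comp e.symm.surjective
    · intro hf c
      obtain ⟨b, hb⟩ := hf (e' c)
      refine ⟨e.symm b, e'.injective ?_⟩
      simpa [Equiv.arrowCongr] using hb)

lemma sur_card {α γ : Type*} [Fintype α] [Fintype γ] {m j : ℕ}
    (hm : Fintype.card α = m) (hj : Fintype.card γ = j) :
    Nat.card {f : α → γ // Surjective f} = Sur m j :=
  Nat.card_congr (surCongr (Fintype.equivFinOfCardEq hm) (Fintype.equivFinOfCardEq hj))

lemma Sur_eq_zero_of_lt {m j : ℕ} (h : m < j) : Sur m j = 0 := by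
  have : IsEmpty {f : Fin m → Fin j // Surjective f} := by
    constructor
    rintro ⟨f, hf⟩
    have := Fintype.card_le_of_surjective f hf
    simp only [Fintype.card_fin] at this
    omega
  exact Nat.card_of_isEmpty

lemma Sur_zero_right {m : ℕ} (h : 1 ≤ m) : Sur m 0 = 0 := by
  have : IsEmpty {f : Fin m → Fin 0 // Surjective f} := by
    constructor
    rintro ⟨f, -⟩
    exact (f ⟨0, h⟩).elim0
  exact Nat.card_of_isEmpty

lemma Sur_zero_zero : Sur 0 0 = 1 := by
  rw [Sur, Nat.card_eq_one_iff_unique]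
  constructor
  · constructor
    rintro ⟨f, -⟩ ⟨g, -⟩
    exact Subtype.ext (funext fun x => x.elim0)
  · exact ⟨⟨fun x => x.elim0, fun y => y.elim0⟩⟩

lemma nat_card_sigma {ι : Type} [Fintype ι] (F : ι → Type) [∀ i, Finite (F i)] :
    Nat.card (Σ i, F i) = ∑ i : ι, Nat.card (F i) := by
  letI := fun i => Fintype.ofFinite (F i)
  simp only [Nat.card_eq_fintype_card]
  exact Fintype.card_sigma

variable {m j : ℕ}

lemma surj_snoc_of_surj (c : Fin j) {g : Fin m → Fin j} (hg : Surjective g) :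
    Surjective (Fin.snoc g c : Fin (m+1) → Fin j) := by
  intro y
  obtain ⟨i, hi⟩ := hg y
  exact ⟨i.castSucc, by simpa using hi⟩

lemma surj_snoc_of_ne (c : Fin j) (g : Fin m → {x : Fin j // x ≠ c}) (hg : Surjective g) :
    Surjective (Fin.snoc (fun i => (g i).1) c : Fin (m+1) → Fin j) := by
  intro y
  by_cases h : y = c
  · exact ⟨Fin.last m, by simp [h]⟩
  · obtain ⟨i, hi⟩ := hg ⟨y, h⟩
    refine ⟨i.castSucc, ?_⟩
    simp only [Fin.snoc_castSucc]
    rw [hi]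

def Phi (m j : ℕ) :
    (Σ c : Fin j, ({g : Fin m → Fin j // Surjective g} ⊕
      {g : Fin m → {x : Fin j // x ≠ c} // Surjective g})) →
    {f : Fin (m+1) → Fin j // Surjective f}
  | ⟨c, .inl g⟩ => ⟨Fin.snoc g.1 c, surj_snoc_of_surj c g.2⟩
  | ⟨c, .inr g⟩ => ⟨Fin.snoc (fun i => (g.1 i).1) c, surj_snoc_of_ne c g.1 g.2⟩

lemma Phi_bij (m j : ℕ) : Bijective (Phi m j) := by
  constructor
  · rintro ⟨c₁, d₁⟩ ⟨c₂, d₂⟩ h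
    have hfun := congrArg Subtype.val h
    have hc : c₁ = c₂ := by
      have := congrFun hfun (Fin.last m)
      cases d₁ <;> cases d₂ <;> simpa [Phi] using this
    subst hc
    have hd : d₁ = d₂ := by
      cases d₁ with
      | inl g₁ =>
        cases d₂ with
        | inl g₂ =>
          congr 1
          refine Subtype.ext (funext fun i => ?_)
          have := congrFun hfun i.castSucc
          simpa [Phi] using this
        | inr g₂ =>
          exfalso
          obtain ⟨i, hi⟩ := g₁.2 c₁
          have := congrFun hfun i.castSucc
          simp only [Phi, Fin.snoc_castSucc] at this
          exact (g₂.1 i).2 (by rw [← this, hi])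
      | inr g₁ =>
        cases d₂ with
        | inl g₂ =>
          exfalso
          obtain ⟨i, hi⟩ := g₂.2 c₁
          have := congrFun hfun i.castSucc
          simp only [Phi, Fin.snoc_castSucc] at this
          exact (g₁.1 i).2 (by rw [this, hi])
        | inr g₂ =>
          congr 1
          refine Subtype.ext (funext fun i => Subtype.ext ?_)
          have := congrFun hfun i.castSucc
          simpa [Phi] using this
    rw [hd]
  · rintro ⟨f, hf⟩
    classical
    set c := f (Fin.last m) with hcdef
    set g : Fin m → Fin j := fun i => f i.castSucc with hgdef
    have hsnoc : f = Fin.snoc g c := by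
      funext i
      refine Fin.lastCases ?_ (fun i => ?_) i
      · simp [hcdef]
      · simp [hgdef]
    by_cases hg : Surjective g
    · exact ⟨⟨c, .inl ⟨g, hg⟩⟩, Subtype.ext hsnoc.symm⟩
    · have hc : ∀ i, g i ≠ c := by
        intro i hic
        apply hg
        intro y
        obtain ⟨a, ha⟩ := hf y
        refine Fin.lastCases ?_ (fun b hb => ⟨b, hb⟩) a ha
        intro ha
        exact ⟨i, by rw [hic, hcdef, ha]⟩
      refine ⟨⟨c, .inr ⟨fun i => ⟨g i, hc i⟩, ?_⟩⟩, Subtype.ext hsnoc.symm⟩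
      rintro ⟨y, hy⟩
      obtain ⟨a, ha⟩ := hf y
      refine Fin.lastCases ?_ (fun b hb => ⟨b, Subtype.ext hb⟩) a ha
      intro ha
      exact absurd ha.symm hy

lemma Sur_succ (m j : ℕ) : Sur (m+1) j = j * (Sur m j + Sur m (j - 1)) := by
  rcases Nat.eq_zero_or_pos j with rfl | hj
  · rw [Sur_zero_right (by omega), Nat.zero_mul]
  have h1 : Sur (m+1) j = Nat.card (Σ c : Fin j, ({g : Fin m → Fin j // Surjective g} ⊕
      {g : Fin m → {x : Fin j // x ≠ c} // Surjective g})) :=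
    (Nat.card_eq_of_bijective _ (Phi_bij m j)).symm
  rw [h1, nat_card_sigma]
  have h2 : ∀ c : Fin j, Nat.card ({g : Fin m → Fin j // Surjective g} ⊕
      {g : Fin m → {x : Fin j // x ≠ c} // Surjective g}) = Sur m j + Sur m (j-1) := by
    intro c
    rw [Nat.card_sum]
    congr 1
    exact sur_card (Fintype.card_fin m) (by simp [Fintype.card_subtype_compl])
  rw [Finset.sum_congr rfl (fun c _ => h2 c), Finset.sum_const, Finset.card_univ,
    Fintype.card_fin, smul_eq_mul]

section GraphBasics
variable {V : Type} [Fintype V] [DecidableEq V]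

lemma ncard_nbr (G : SimpleGraph V) [DecidableRel G.Adj] (x : V) :
    (G.neighborSet x).ncard = G.degree x := by
  rw [Set.ncard_eq_toFinset_card', SimpleGraph.degree, SimpleGraph.neighborFinset_def]

lemma walk_closed {G : SimpleGraph V} {S : Set V}
    (hS : ∀ a ∈ S, ∀ b, G.Adj a b → b ∈ S) {a b : V} (p : G.Walk a b) (ha : a ∈ S) : b ∈ S := by
  induction p with
  | nil => exact ha
  | cons h q ih => exact ih (hS _ ha _ h)

lemma conn_nbr_nonempty {G : SimpleGraph V} (hG : G.Connected) (h2 : 2 ≤ Fintype.card V)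
    (v : V) : (G.neighborSet v).Nonempty := by
  obtain ⟨w, hw⟩ := Fintype.exists_ne_of_one_lt_card (by omega) v
  obtain ⟨p⟩ := hG.preconnected v w
  obtain ⟨x, hadj, q, -⟩ := SimpleGraph.Walk.exists_eq_cons_of_ne hw.symm p
  exact ⟨x, hadj⟩

lemma two_le_leaves {G : SimpleGraph V} (hT : G.IsTree) (h2 : 2 ≤ Fintype.card V)
    {L : Finset V} (hlf : ∀ i, ((G.neighborSet i).ncard = 1 ↔ i ∈ L)) : 2 ≤ L.card := by
  classical
  by_contra hcon
  push_neg at hcon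
  have hdeg1 : ∀ v, 1 ≤ G.degree v := by
    intro v
    have hne := conn_nbr_nonempty hT.isConnected h2 v
    rw [← ncard_nbr]
    exact (Set.ncard_pos (Set.toFinite _)).mpr hne
  have hdeg2 : ∀ v ∉ L, 2 ≤ G.degree v := by
    intro v hv
    have h1 := hdeg1 v
    have h2' : G.degree v ≠ 1 := by
      intro h
      exact hv ((hlf v).mp (by rw [ncard_nbr]; exact h))
    omega
  have hsum := G.sum_degrees_eq_twice_card_edges
  have hedge := hT.card_edgeFinset
  have hsplit : ∑ v ∈ L, G.degree v + ∑ v ∈ Lᶜ, G.degree v = ∑ v, G.degree v :=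
    Finset.sum_add_sum_compl L _
  have b1 : L.card * 1 ≤ ∑ v ∈ L, G.degree v := by
    rw [mul_one]
    calc L.card = ∑ _v ∈ L, 1 := by simp
    _ ≤ _ := Finset.sum_le_sum (fun i _ => hdeg1 i)
  have b2 : Lᶜ.card * 2 ≤ ∑ v ∈ Lᶜ, G.degree v := by
    calc Lᶜ.card * 2 = ∑ _v ∈ Lᶜ, 2 := by rw [Finset.sum_const, smul_eq_mul, mul_comm]
    _ ≤ _ := Finset.sum_le_sum (fun i hi => hdeg2 i (Finset.mem_compl.mp hi))
  have hcc : Lᶜ.card = Fintype.card V - L.card := by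
    rw [Finset.card_compl]
  have hle := Finset.card_le_univ L
  omega

lemma neighbor_not_leaf {G : SimpleGraph V} (hT : G.IsTree) (h3 : 3 ≤ Fintype.card V)
    {ℓ u : V} (hnb : G.neighborSet ℓ = {u}) {L : Finset V}
    (hlf : ∀ i, ((G.neighborSet i).ncard = 1 ↔ i ∈ L)) : u ∉ L := by
  intro huL
  have hadj : G.Adj ℓ u := by
    have : u ∈ G.neighborSet ℓ := by rw [hnb]; exact rfl
    exact this
  obtain ⟨w, hw⟩ := Set.ncard_eq_one.mp ((hlf u).mpr huL)
  have hw : G.neighborSet u = {ℓ} := by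
    have hmem : ℓ ∈ G.neighborSet u := hadj.symm
    rw [hw] at hmem
    rw [hw, hmem]
  obtain ⟨z, hz1, hz2⟩ : ∃ z, z ≠ ℓ ∧ z ≠ u := by
    by_contra hcon
    push_neg at hcon
    have hsub : (Finset.univ : Finset V) ⊆ {ℓ, u} := by
      intro x _
      rcases eq_or_ne x ℓ with rfl | hx
      · simp
      · simp [hcon x hx]
    have := Finset.card_le_card hsub
    rw [Finset.card_univ] at this
    have h2 := Finset.card_insert_le ℓ ({u} : Finset V)
    simp at h2
    omega
  obtain ⟨p⟩ := hT.isConnected.preconnected ℓ z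
  have hcl : ∀ a ∈ ({ℓ, u} : Set V), ∀ b, G.Adj a b → b ∈ ({ℓ, u} : Set V) := by
    rintro a (rfl | rfl) b hab
    · have : b ∈ G.neighborSet a := hab
      rw [hnb] at this
      exact Or.inr this
    · have : b ∈ G.neighborSet a := hab
      rw [hw] at this
      exact Or.inl this
  have := walk_closed hcl p (Or.inl rfl)
  rcases this with h | h
  · exact hz1 h
  · exact hz2 h

end GraphBasics

section Lift
variable {V : Type} [DecidableEq V]

lemma path_avoid {G : SimpleGraph V} {ℓ u : V} (hnb : G.neighborSet ℓ = {u}) {a b : V}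
    (p : G.Walk a b) (hp : p.IsPath) (ha : a ≠ ℓ) (hb : b ≠ ℓ) : ℓ ∉ p.support := by
  intro hmem
  have hspec := p.take_spec hmem
  obtain ⟨c₁, h₁, r₁, hr₁⟩ := Walk.exists_eq_cons_of_ne (Ne.symm ha) (p.takeUntil ℓ hmem).reverse
  have hc₁ : c₁ = u := by
    have : c₁ ∈ G.neighborSet ℓ := h₁
    rw [hnb] at this; exact this
  have hu₁ : u ∈ (p.takeUntil ℓ hmem).support := by
    rw [← hc₁]
    have : c₁ ∈ (p.takeUntil ℓ hmem).reverse.support := by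
      rw [hr₁]; exact List.mem_cons_of_mem _ (Walk.start_mem_support r₁)
    rwa [Walk.support_reverse, List.mem_reverse] at this
  obtain ⟨c₂, h₂, r₂, hr₂⟩ := Walk.exists_eq_cons_of_ne (Ne.symm hb) (p.dropUntil ℓ hmem)
  have hc₂ : c₂ = u := by
    have : c₂ ∈ G.neighborSet ℓ := h₂
    rw [hnb] at this; exact this
  have hu₂ : u ∈ (p.dropUntil ℓ hmem).support.tail := by
    rw [← hc₂, hr₂]
    exact Walk.start_mem_support r₂
  have hnd : ((p.takeUntil ℓ hmem).support ++ (p.dropUntil ℓ hmem).support.tail).Nodup := by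
    rw [← Walk.support_append, hspec]
    exact hp.support_nodup
  exact List.disjoint_of_nodup_append hnd hu₁ hu₂

variable {ℓ : V}

def liftWalk {H : SimpleGraph V} :
    ∀ {a b : V} (p : H.Walk a b) (ha : a ≠ ℓ) (hb : b ≠ ℓ), ℓ ∉ p.support →
      (H.comap (Subtype.val : {x : V // x ≠ ℓ} → V)).Walk ⟨a, ha⟩ ⟨b, hb⟩
  | _, _, Walk.nil, _, _, _ => Walk.nil
  | _, _, Walk.cons h q, _, hb, hp =>
      Walk.cons (by exact h)
        (liftWalk q
          (fun hc => hp (by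
            rw [Walk.support_cons]
            exact List.mem_cons_of_mem _ (hc ▸ Walk.start_mem_support q)))
          hb
          (fun hc => hp (by
            rw [Walk.support_cons]
            exact List.mem_cons_of_mem _ hc)))

lemma liftWalk_map {H : SimpleGraph V} {a b : V} (p : H.Walk a b) (ha : a ≠ ℓ) (hb : b ≠ ℓ)
    (hp : ℓ ∉ p.support) :
    (liftWalk p ha hb hp).map
      (SimpleGraph.Embedding.comap (Function.Embedding.subtype fun x => x ≠ ℓ) H).toHom = p := by
  induction p with
  | nil => rfl
  | cons h q ih =>
    simp only [liftWalk, Walk.map_cons]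
    congr 1
    exact congrArg (Walk.cons h) (ih _ hb _)

lemma comap_acyclic {H : SimpleGraph V} (hH : H.IsAcyclic) :
    (H.comap (Subtype.val : {x : V // x ≠ ℓ} → V)).IsAcyclic := by
  intro a c hc
  have hmap := (Walk.map_isCycle_iff_of_injective
    (p := c) (f := (SimpleGraph.Embedding.comap (Function.Embedding.subtype fun x => x ≠ ℓ) H).toHom)
    (Subtype.val_injective)).mpr hc
  exact hH _ hmap

lemma not_acyclic_of_avoid {H : SimpleGraph V} {a : V} (c : H.Walk a a) (hc : c.IsCycle)
    (ha : a ≠ ℓ) (hav : ℓ ∉ c.support) :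
    ¬ (H.comap (Subtype.val : {x : V // x ≠ ℓ} → V)).IsAcyclic := by
  intro hA
  have h1 : ((liftWalk c ha ha hav).map
      (SimpleGraph.Embedding.comap (Function.Embedding.subtype fun x => x ≠ ℓ) H).toHom).IsCycle := by
    rw [liftWalk_map]; exact hc
  exact hA _ ((Walk.map_isCycle_iff_of_injective Subtype.val_injective).mp h1)

lemma comap_connected {G : SimpleGraph V} (hT : G.IsTree) {u : V}
    (hnb : G.neighborSet ℓ = {u}) (hu : u ≠ ℓ) :
    (G.comap (Subtype.val : {x : V // x ≠ ℓ} → V)).Connected := by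
  haveI : Nonempty {x : V // x ≠ ℓ} := ⟨⟨u, hu⟩⟩
  rw [connected_iff]
  refine ⟨fun x y => ?_, inferInstance⟩
  obtain ⟨w⟩ := hT.isConnected.preconnected ↑x ↑y
  have hav := path_avoid hnb w.toPath.1 w.toPath.2 x.2 y.2
  exact ⟨liftWalk w.toPath.1 x.2 y.2 hav⟩

end Lift

section Ext
variable {V : Type} [DecidableEq V] (ℓ : V)

def extG (G' : SimpleGraph {x : V // x ≠ ℓ}) (v : {x : V // x ≠ ℓ}) : SimpleGraph V where
  Adj a b := (∃ (ha : a ≠ ℓ) (hb : b ≠ ℓ), G'.Adj ⟨a, ha⟩ ⟨b, hb⟩) ∨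
    (a = ℓ ∧ b = ↑v) ∨ (b = ℓ ∧ a = ↑v)
  symm := by
    constructor
    rintro a b (⟨ha, hb, h⟩ | ⟨h1, h2⟩ | ⟨h1, h2⟩)
    · exact Or.inl ⟨hb, ha, h.symm⟩
    · exact Or.inr (Or.inr ⟨h1, h2⟩)
    · exact Or.inr (Or.inl ⟨h1, h2⟩)
  loopless := by
    constructor
    rintro a (⟨ha, hb, h⟩ | ⟨rfl, h2⟩ | ⟨rfl, h2⟩)
    · exact G'.loopless.irrefl _ h
    · exact v.2 h2.symm
    · exact v.2 h2.symm

variable {ℓ} {G' : SimpleGraph {x : V // x ≠ ℓ}} {v : {x : V // x ≠ ℓ}}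

lemma extG_adj_ell {b : V} : (extG ℓ G' v).Adj ℓ b ↔ b = ↑v := by
  constructor
  · rintro (⟨ha, hb, h⟩ | ⟨h1, h2⟩ | ⟨h1, h2⟩)
    · exact absurd rfl ha
    · exact h2
    · exact absurd h2.symm v.2
  · rintro rfl
    exact Or.inr (Or.inl ⟨rfl, rfl⟩)

lemma extG_adj_of_ne {a b : V} (ha : a ≠ ℓ) (hb : b ≠ ℓ) :
    (extG ℓ G' v).Adj a b ↔ G'.Adj ⟨a, ha⟩ ⟨b, hb⟩ := by
  constructor
  · rintro (⟨ha', hb', h⟩ | ⟨h1, h2⟩ | ⟨h1, h2⟩)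
    · exact h
    · exact absurd h1 ha
    · exact absurd h1 hb
  · intro h
    exact Or.inl ⟨ha, hb, h⟩

lemma extG_comap : (extG ℓ G' v).comap (Subtype.val : {x : V // x ≠ ℓ} → V) = G' := by
  ext ⟨a, ha⟩ ⟨b, hb⟩
  exact extG_adj_of_ne ha hb

lemma extG_nbr_ell : (extG ℓ G' v).neighborSet ℓ = {(↑v : V)} :=
  Set.ext fun _ => extG_adj_ell

lemma extG_nbr_ne {a : {x : V // x ≠ ℓ}} (hav : a ≠ v) :
    (extG ℓ G' v).neighborSet ↑a = Subtype.val '' (G'.neighborSet a) := by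
  ext b
  constructor
  · intro h
    have hb : b ≠ ℓ := by
      rintro rfl
      exact hav (Subtype.ext (extG_adj_ell.mp h.symm))
    exact ⟨⟨b, hb⟩, (extG_adj_of_ne a.2 hb).mp h, rfl⟩
  · rintro ⟨c, hc, rfl⟩
    exact (extG_adj_of_ne a.2 c.2).mpr hc

lemma extG_nbr_v : (extG ℓ G' v).neighborSet ↑v = insert ℓ (Subtype.val '' G'.neighborSet v) := by
  ext b
  constructor
  · intro h
    by_cases hb : b = ℓ
    · exact Or.inl hb
    · exact Or.inr ⟨⟨b, hb⟩, (extG_adj_of_ne v.2 hb).mp h, rfl⟩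
  · rintro (rfl | ⟨c, hc, rfl⟩)
    · exact ((extG_adj_ell (G' := G') (v := v)).mpr rfl).symm
    · exact (extG_adj_of_ne v.2 c.2).mpr hc

lemma extG_connected (hG' : G'.Connected) : (extG ℓ G' v).Connected := by
  have key : ∀ a : V, (extG ℓ G' v).Reachable a ↑v := by
    intro a
    by_cases ha : a = ℓ
    · subst ha
      exact (extG_adj_ell.mpr rfl).reachable
    · obtain ⟨w⟩ := hG'.preconnected ⟨a, ha⟩ v
      exact ⟨w.map ⟨Subtype.val, fun {x y} h => Or.inl ⟨x.2, y.2, h⟩⟩⟩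
  rw [connected_iff]
  exact ⟨fun a b => (key a).trans (key b).symm, ⟨ℓ⟩⟩

lemma extG_acyclic (hG' : G'.IsAcyclic) : (extG ℓ G' v).IsAcyclic := by
  intro a c hc
  by_cases hmem : ℓ ∈ c.support
  · have hd : (c.rotate ℓ hmem).IsCycle := hc.rotate hmem
    generalize hgen : c.rotate ℓ hmem = d at hd
    clear hgen
    cases d with
    | nil => exact hd.not_of_nil
    | cons hadj e =>
      rename_i b
      have hb : b = ↑v := by
        have : b ∈ (extG ℓ G' v).neighborSet ℓ := hadj
        rw [extG_nbr_ell] at this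
        exact this
      obtain ⟨b', hadj', e', he'⟩ := Walk.exists_eq_cons_of_ne (hadj.ne) e.reverse
      have hb' : b' = ↑v := by
        have : b' ∈ (extG ℓ G' v).neighborSet ℓ := hadj'
        rw [extG_nbr_ell] at this
        exact this
      have hedge : s(ℓ, b') ∈ e.reverse.edges := by
        rw [he']
        exact List.mem_cons_self
      rw [Walk.edges_reverse, List.mem_reverse] at hedge
      have hnd := hd.edges_nodup
      rw [Walk.edges_cons] at hnd
      have : s(ℓ, b) ∉ e.edges := (List.nodup_cons.mp hnd).1
      rw [hb', ← hb] at hedge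
      exact this hedge
  · have ha : a ≠ ℓ := fun h => hmem (h ▸ c.start_mem_support)
    have h1 := not_acyclic_of_avoid c hc ha hmem
    rw [extG_comap] at h1
    exact h1 hG'

end Ext

section Decomp
variable {V : Type} [Fintype V] [DecidableEq V]

lemma card_ne (ℓ : V) : Fintype.card {x : V // x ≠ ℓ} = Fintype.card V - 1 := by
  classical
  have h := Fintype.card_subtype_compl (fun x : V => x = ℓ)
  rw [Fintype.card_subtype_eq] at h
  exact h

def Psi (ℓ : V) (L : Finset V) (hℓ : ℓ ∈ L) (h3 : 3 ≤ Fintype.card V)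
    (p : Σ _w : {w : {x : V // x ≠ ℓ} // (w : V) ∉ L},
      {G' : SimpleGraph {x : V // x ≠ ℓ} // G'.IsTree ∧
        ∀ x : {x : V // x ≠ ℓ}, x ≠ _w.1 → ((G'.neighborSet x).ncard = 1 ↔ (x : V) ∈ L)}) :
    {G : SimpleGraph V // G.IsTree ∧ ∀ i, ((G.neighborSet i).ncard = 1 ↔ i ∈ L)} :=
  ⟨extG ℓ p.2.1 p.1.1, by
    obtain ⟨⟨v, hvL⟩, ⟨G', hT', hlf'⟩⟩ := p
    refine ⟨⟨extG_connected hT'.isConnected, extG_acyclic hT'.IsAcyclic⟩, ?_⟩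
    intro i
    by_cases hi : i = ℓ
    · subst hi
      rw [extG_nbr_ell]
      simp [Set.ncard_singleton, hℓ]
    · by_cases hiv : i = ↑v
      · subst hiv
        rw [extG_nbr_v]
        have him : ℓ ∉ Subtype.val '' G'.neighborSet v := by
          rintro ⟨c, -, hc⟩
          exact c.2 hc
        rw [Set.ncard_insert_of_notMem him (Set.toFinite _),
          Set.ncard_image_of_injective _ Subtype.val_injective]
        have hpos : 0 < (G'.neighborSet v).ncard := by
          refine (Set.ncard_pos (Set.toFinite _)).mpr
            (conn_nbr_nonempty hT'.isConnected ?_ v)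
          rw [card_ne]
          omega
        exact iff_of_false (by omega) hvL
      · have hne : (⟨i, hi⟩ : {x : V // x ≠ ℓ}) ≠ v := fun h => hiv (congrArg Subtype.val h)
        rw [extG_nbr_ne hne, Set.ncard_image_of_injective _ Subtype.val_injective]
        exact hlf' ⟨i, hi⟩ hne⟩

lemma Psi_bij (ℓ : V) (L : Finset V) (hℓ : ℓ ∈ L) (h3 : 3 ≤ Fintype.card V) :
    Bijective (Psi ℓ L hℓ h3) := by
  constructor
  · rintro ⟨⟨v₁, hv₁⟩, ⟨G₁, hG₁⟩⟩ ⟨⟨v₂, hv₂⟩, ⟨G₂, hG₂⟩⟩ h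
    have hEq : extG ℓ G₁ v₁ = extG ℓ G₂ v₂ := congrArg Subtype.val h
    have hv : v₁ = v₂ := by
      have h1 : ({(↑v₁ : V)} : Set V) = {(↑v₂ : V)} := by
        rw [← extG_nbr_ell (G' := G₁) (v := v₁), ← extG_nbr_ell (G' := G₂) (v := v₂), hEq]
      exact Subtype.ext (Set.singleton_eq_singleton_iff.mp h1)
    subst hv
    have hG : G₁ = G₂ := by
      rw [← extG_comap (G' := G₁) (v := v₁), ← extG_comap (G' := G₂) (v := v₁), hEq]
    subst hG
    rfl
  · rintro ⟨G, hT, hlf⟩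
    obtain ⟨u, hu⟩ := Set.ncard_eq_one.mp ((hlf ℓ).mpr hℓ)
    have hadj : G.Adj ℓ u := by
      have : u ∈ G.neighborSet ℓ := by rw [hu]; exact rfl
      exact this
    have huℓ : u ≠ ℓ := fun h => G.loopless.irrefl ℓ (h ▸ hadj)
    have huL : u ∉ L := neighbor_not_leaf hT h3 hu hlf
    have hT' : (G.comap (Subtype.val : {x : V // x ≠ ℓ} → V)).IsTree :=
      ⟨comap_connected hT hu huℓ, comap_acyclic hT.IsAcyclic⟩
    have hnbr' : ∀ x : {x : V // x ≠ ℓ}, x ≠ ⟨u, huℓ⟩ →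
        Subtype.val '' ((G.comap (Subtype.val : {x : V // x ≠ ℓ} → V)).neighborSet x)
          = G.neighborSet ↑x := by
      intro x hx
      ext b
      constructor
      · rintro ⟨c, hc, rfl⟩
        exact hc
      · intro hb
        have hbl : b ≠ ℓ := by
          intro h
          have hadj2 : G.Adj b ↑x := ((G.mem_neighborSet _ _).mp hb).symm
          rw [h] at hadj2
          have h2 : (↑x : V) ∈ G.neighborSet ℓ := hadj2
          rw [hu] at h2
          exact hx (Subtype.ext h2)
        exact ⟨⟨b, hbl⟩, hb, rfl⟩
    have hlf' : ∀ x : {x : V // x ≠ ℓ}, x ≠ ⟨u, huℓ⟩ →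
        (((G.comap (Subtype.val : {x : V // x ≠ ℓ} → V)).neighborSet x).ncard = 1 ↔ (x : V) ∈ L) := by
      intro x hx
      rw [← Set.ncard_image_of_injective _ Subtype.val_injective, hnbr' x hx]
      exact hlf ↑x
    refine ⟨⟨⟨⟨u, huℓ⟩, huL⟩, ⟨G.comap (Subtype.val : {x : V // x ≠ ℓ} → V), hT', hlf'⟩⟩, ?_⟩
    refine Subtype.ext ?_
    show extG ℓ _ _ = G
    ext a b
    by_cases ha : a = ℓ
    · rw [ha, extG_adj_ell]
      constructor
      · rintro rfl
        exact hadj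
      · intro h
        have h2 : b ∈ G.neighborSet ℓ := h
        rw [hu] at h2
        exact h2
    · by_cases hb : b = ℓ
      · rw [hb, (extG ℓ _ _).adj_comm, G.adj_comm, extG_adj_ell]
        constructor
        · rintro rfl
          exact hadj
        · intro h
          have h2 : a ∈ G.neighborSet ℓ := h
          rw [hu] at h2
          exact h2
      · rw [extG_adj_of_ne ha hb]
        exact Iff.rfl

lemma decomp (ℓ : V) (L : Finset V) (hℓ : ℓ ∈ L) (h3 : 3 ≤ Fintype.card V) :
    Nat.card {G : SimpleGraph V // G.IsTree ∧ ∀ i, ((G.neighborSet i).ncard = 1 ↔ i ∈ L)} =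
    Nat.card (Σ _w : {w : {x : V // x ≠ ℓ} // (w : V) ∉ L},
      {G' : SimpleGraph {x : V // x ≠ ℓ} // G'.IsTree ∧
        ∀ x : {x : V // x ≠ ℓ}, x ≠ _w.1 → ((G'.neighborSet x).ncard = 1 ↔ (x : V) ∈ L)}) :=
  (Nat.card_eq_of_bijective _ (Psi_bij ℓ L hℓ h3)).symm

end Decomp

section Inner
variable {W : Type} [Fintype W] [DecidableEq W]

lemma inner_card (P : SimpleGraph W → Prop) (v : W) (C : W → Prop) (hv : ¬ C v) :
    Nat.card {G : SimpleGraph W // P G ∧ ∀ x, x ≠ v → ((G.neighborSet x).ncard = 1 ↔ C x)} =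
    Nat.card {G : SimpleGraph W // P G ∧ ∀ x, ((G.neighborSet x).ncard = 1 ↔ (x = v ∨ C x))} +
    Nat.card {G : SimpleGraph W // P G ∧ ∀ x, ((G.neighborSet x).ncard = 1 ↔ C x)} := by
  classical
  set Q : SimpleGraph W → Prop :=
    fun G => P G ∧ ∀ x, x ≠ v → ((G.neighborSet x).ncard = 1 ↔ C x) with hQ
  have e0 : {G : SimpleGraph W // Q G} ≃
      {x : {G : SimpleGraph W // Q G} // (x.1.neighborSet v).ncard = 1} ⊕
      {x : {G : SimpleGraph W // Q G} // ¬ (x.1.neighborSet v).ncard = 1} :=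
    (Equiv.sumCompl _).symm
  have eA : {x : {G : SimpleGraph W // Q G} // (x.1.neighborSet v).ncard = 1} ≃
      {G : SimpleGraph W // P G ∧ ∀ x, ((G.neighborSet x).ncard = 1 ↔ (x = v ∨ C x))} := by
    refine (Equiv.subtypeSubtypeEquivSubtypeInter Q
      (fun G => (G.neighborSet v).ncard = 1)).trans (Equiv.subtypeEquivRight ?_)
    intro G
    constructor
    · rintro ⟨⟨hP, hC⟩, hD⟩
      refine ⟨hP, fun x => ?_⟩
      by_cases hx : x = v
      · subst hx
        simp [hD]
      · constructor
        · intro h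
          exact Or.inr ((hC x hx).mp h)
        · rintro (rfl | hm)
          · exact absurd rfl hx
          · exact (hC x hx).mpr hm
    · rintro ⟨hP, hAll⟩
      refine ⟨⟨hP, fun x hx => ?_⟩, ?_⟩
      · rw [hAll x]
        constructor
        · rintro (rfl | h)
          · exact absurd rfl hx
          · exact h
        · exact Or.inr
      · rw [hAll v]
        exact Or.inl rfl
  have eB : {x : {G : SimpleGraph W // Q G} // ¬ (x.1.neighborSet v).ncard = 1} ≃
      {G : SimpleGraph W // P G ∧ ∀ x, ((G.neighborSet x).ncard = 1 ↔ C x)} := by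
    refine (Equiv.subtypeSubtypeEquivSubtypeInter Q
      (fun G => ¬ (G.neighborSet v).ncard = 1)).trans (Equiv.subtypeEquivRight ?_)
    intro G
    constructor
    · rintro ⟨⟨hP, hC⟩, hD⟩
      refine ⟨hP, fun x => ?_⟩
      by_cases hx : x = v
      · subst hx
        exact iff_of_false hD hv
      · exact hC x hx
    · rintro ⟨hP, hAll⟩
      exact ⟨⟨hP, fun x _ => hAll x⟩, fun hD => hv ((hAll v).mp hD)⟩
  rw [Nat.card_congr e0, Nat.card_sum, Nat.card_congr eA, Nat.card_congr eB]
end Inner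

section Base
variable {V : Type} [Fintype V] [DecidableEq V]

lemma two_elt {a b c : V} (h2 : Fintype.card V = 2) (hab : a ≠ b) (hca : c ≠ a) : c = b := by
  by_contra hcb
  have hle : ({a, b, c} : Finset V).card ≤ 2 := h2 ▸ Finset.card_le_univ _
  have h3 : ({a, b, c} : Finset V).card = 3 := by
    rw [Finset.card_insert_of_notMem (by simp [hab, Ne.symm hca]),
      Finset.card_insert_of_notMem (by simp [Ne.symm hcb]), Finset.card_singleton]
  omega

lemma top_isTree (h2 : Fintype.card V = 2) : (⊤ : SimpleGraph V).IsTree := by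
  constructor
  · rw [connected_iff]
    refine ⟨fun a b => ?_, Fintype.card_pos_iff.mp (by omega)⟩
    by_cases h : a = b
    · rw [h]
    · exact ((by simpa using h : (⊤ : SimpleGraph V).Adj a b)).reachable
  · intro a c hc
    have h3 := hc.three_le_length
    have hnd := hc.support_nodup
    have hlen := List.Nodup.length_le_card hnd
    rw [List.length_tail, Walk.length_support] at hlen
    omega

lemma base2 (V : Type) [Fintype V] [DecidableEq V] (hcard : Fintype.card V = 2) (L : Finset V) :
    Nat.card {G : SimpleGraph V // G.IsTree ∧ ∀ i, ((G.neighborSet i).ncard = 1 ↔ i ∈ L)} =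
      Sur 0 (2 - L.card) := by
  by_cases hL : L.card = 2
  · have hLu : L = Finset.univ := Finset.eq_univ_of_card L (by rw [hL, hcard])
    rw [hL, Nat.sub_self, Sur_zero_zero, Nat.card_eq_one_iff_unique]
    have key : ∀ (G : SimpleGraph V), G.IsTree → G = ⊤ := by
      intro G hT
      ext a b
      rw [top_adj]
      constructor
      · exact G.ne_of_adj
      · intro hab
        obtain ⟨p⟩ := hT.isConnected.preconnected a b
        obtain ⟨c, hadj, q, -⟩ := Walk.exists_eq_cons_of_ne hab p
        have hcb : c = b := two_elt hcard hab hadj.ne'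
        rwa [← hcb]
    constructor
    · constructor
      rintro ⟨G₁, h₁, hl₁⟩ ⟨G₂, h₂, hl₂⟩
      exact Subtype.ext (show G₁ = G₂ by rw [key G₁ h₁, key G₂ h₂])
    · refine ⟨⟨⊤, top_isTree hcard, fun i => ?_⟩⟩
      have hnb : (⊤ : SimpleGraph V).neighborSet i = {i}ᶜ := by
        ext j
        simp [ne_comm]
      rw [hnb]
      have hcc : ({i}ᶜ : Set V).ncard = 1 := by
        rw [Set.ncard_eq_toFinset_card', Set.toFinset_compl, Set.toFinset_singleton,
          Finset.card_compl, Finset.card_singleton, hcard]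
      rw [hcc]
      simp [hLu]
  · have hle : L.card ≤ 2 := by
      have := Finset.card_le_univ L
      rwa [hcard] at this
    have hE : IsEmpty {G : SimpleGraph V // G.IsTree ∧
        ∀ i, ((G.neighborSet i).ncard = 1 ↔ i ∈ L)} := by
      constructor
      rintro ⟨G, hT, hlf⟩
      have := two_le_leaves hT (by omega) hlf
      omega
    rw [Nat.card_of_isEmpty]
    exact (Sur_eq_zero_of_lt (by omega)).symm
end Base

lemma key (n : ℕ) : ∀ (V : Type) [Fintype V] [DecidableEq V] (L : Finset V), 2 ≤ n →
    Fintype.card V = n →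
    Nat.card {G : SimpleGraph V // G.IsTree ∧ ∀ i, ((G.neighborSet i).ncard = 1 ↔ i ∈ L)} =
      Sur (n - 2) (n - L.card) := by
  induction n using Nat.strong_induction_on with
  | _ n IH =>
  intro V _F _D L h2 hcard
  rcases eq_or_lt_of_le h2 with heq | h3
  · rw [← heq] at hcard ⊢
    exact base2 V hcard L
  · rcases Finset.eq_empty_or_nonempty L with rfl | ⟨ℓ, hℓ⟩
    · have hE : IsEmpty {G : SimpleGraph V // G.IsTree ∧
          ∀ i, ((G.neighborSet i).ncard = 1 ↔ i ∈ (∅ : Finset V))} := by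
        constructor
        rintro ⟨G, hT, hlf⟩
        have := two_le_leaves hT (by omega) hlf
        simp at this
      rw [Nat.card_of_isEmpty, Finset.card_empty, Nat.sub_zero]
      exact (Sur_eq_zero_of_lt (by omega)).symm
    · have hk1 : 1 ≤ L.card := Finset.card_pos.mpr ⟨ℓ, hℓ⟩
      have hkn : L.card ≤ n := by
        have := Finset.card_le_univ L
        rwa [hcard] at this
      rw [decomp ℓ L hℓ (by omega), nat_card_sigma]
      have hc' : Fintype.card {x : V // x ≠ ℓ} = n - 1 := by rw [card_ne, hcard]
      have hM : (L.subtype (fun x => x ≠ ℓ)).card = L.card - 1 := by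
        rw [Finset.card_subtype, Finset.filter_ne', Finset.card_erase_of_mem hℓ]
      have hsum : ∀ w : {w : {x : V // x ≠ ℓ} // (w : V) ∉ L},
          Nat.card {G' : SimpleGraph {x : V // x ≠ ℓ} // G'.IsTree ∧
            ∀ x : {x : V // x ≠ ℓ}, x ≠ w.1 → ((G'.neighborSet x).ncard = 1 ↔ (x : V) ∈ L)} =
          Sur (n - 3) (n - L.card - 1) + Sur (n - 3) (n - L.card) := by
        intro w
        rw [inner_card SimpleGraph.IsTree w.1 (fun x : {x : V // x ≠ ℓ} => (x : V) ∈ L) w.2]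
        have hIns : (insert w.1 (L.subtype (fun x => x ≠ ℓ))).card = L.card := by
          rw [Finset.card_insert_of_notMem (fun hmem => w.2 (Finset.mem_subtype.mp hmem)), hM]
          omega
        have eA : {G' : SimpleGraph {x : V // x ≠ ℓ} // G'.IsTree ∧
            ∀ x : {x : V // x ≠ ℓ}, ((G'.neighborSet x).ncard = 1 ↔ (x = w.1 ∨ (x : V) ∈ L))} ≃
            {G' : SimpleGraph {x : V // x ≠ ℓ} // G'.IsTree ∧
            ∀ x : {x : V // x ≠ ℓ}, ((G'.neighborSet x).ncard = 1 ↔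
              x ∈ insert w.1 (L.subtype (fun x => x ≠ ℓ)))} := by
          refine Equiv.subtypeEquivRight fun G' => ?_
          constructor
          · rintro ⟨hT, hAll⟩
            refine ⟨hT, fun x => (hAll x).trans ?_⟩
            rw [Finset.mem_insert, Finset.mem_subtype]
          · rintro ⟨hT, hAll⟩
            refine ⟨hT, fun x => (hAll x).trans ?_⟩
            rw [Finset.mem_insert, Finset.mem_subtype]
        have eB : {G' : SimpleGraph {x : V // x ≠ ℓ} // G'.IsTree ∧
            ∀ x : {x : V // x ≠ ℓ}, ((G'.neighborSet x).ncard = 1 ↔ (x : V) ∈ L)} ≃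
            {G' : SimpleGraph {x : V // x ≠ ℓ} // G'.IsTree ∧
            ∀ x : {x : V // x ≠ ℓ}, ((G'.neighborSet x).ncard = 1 ↔
              x ∈ L.subtype (fun x => x ≠ ℓ))} := by
          refine Equiv.subtypeEquivRight fun G' => ?_
          constructor
          · rintro ⟨hT, hAll⟩
            exact ⟨hT, fun x => (hAll x).trans (Finset.mem_subtype).symm⟩
          · rintro ⟨hT, hAll⟩
            exact ⟨hT, fun x => (hAll x).trans (Finset.mem_subtype)⟩
        rw [Nat.card_congr eA, Nat.card_congr eB]
        congr 1
        · rw [IH (n-1) (by omega) _ _ (by omega) hc', hIns]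
          congr 1 <;> omega
        · rw [IH (n-1) (by omega) _ _ (by omega) hc', hM]
          congr 1 <;> omega
      rw [Finset.sum_congr rfl (fun w _ => hsum w), Finset.sum_const, smul_eq_mul,
        Finset.card_univ]
      have hidx : Fintype.card {w : {x : V // x ≠ ℓ} // (w : V) ∉ L} = n - L.card := by
        have e : {w : {x : V // x ≠ ℓ} // (w : V) ∉ L} ≃ {x : V // x ∉ L} :=
          { toFun := fun w => ⟨↑↑w, w.2⟩
            invFun := fun x => ⟨⟨x.1, fun h => x.2 (h ▸ hℓ)⟩, x.2⟩
            left_inv := fun w => rfl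
            right_inv := fun x => rfl }
        rw [Fintype.card_congr e]
        have h := Fintype.card_subtype_compl (fun x : V => x ∈ L)
        rwa [Fintype.card_coe, hcard] at h
      rw [hidx]
      have hrec := Sur_succ (n - 3) (n - L.card)
      rw [show n - 3 + 1 = n - 2 from by omega] at hrec
      rw [hrec, Nat.add_comm]

/-- There is a bijection between the trees on `[n]` (rooted at vertex 1) whose
set of leaves is exactly `L` with `|L| = k`, and the ordered set partitions of
`{2,...,n-1}` into `n-k` nonempty parts. -/
theorem stmt6 (n k : ℕ) (hn : 3 ≤ n) (hk2 : 2 ≤ k) (hk : k ≤ n - 1)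
    (L : Finset (Fin n)) (hL : L.card = k) :
    Nonempty
      ({G : SimpleGraph (Fin n) //
          G.IsTree ∧ ∀ i, ((G.neighborSet i).ncard = 1 ↔ i ∈ L)} ≃
       {π : Fin (n - k) → Set {i : ℕ // 2 ≤ i ∧ i ≤ n - 1} //
          (∀ j, (π j).Nonempty) ∧ (∀ j j', j ≠ j' → Disjoint (π j) (π j')) ∧
            (⋃ j, π j) = Set.univ}) := by
  classical
  have eS : {i : ℕ // 2 ≤ i ∧ i ≤ n - 1} ≃ {i : ℕ // i ∈ Finset.Icc 2 (n - 1)} :=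
    Equiv.subtypeEquivRight (by intro x; simp [Finset.mem_Icc])
  haveI : Fintype {i : ℕ // 2 ≤ i ∧ i ≤ n - 1} := Fintype.ofEquiv _ eS.symm
  have hcardS : Fintype.card {i : ℕ // 2 ≤ i ∧ i ≤ n - 1} = n - 2 := by
    rw [Fintype.card_congr eS, Fintype.card_coe, Nat.card_Icc]
    omega
  have hLHS : Nat.card {G : SimpleGraph (Fin n) //
      G.IsTree ∧ ∀ i, ((G.neighborSet i).ncard = 1 ↔ i ∈ L)} = Sur (n - 2) (n - k) := by
    have h := key n (Fin n) L (by omega) (by simp)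
    rwa [hL] at h
  -- partition side
  have hRHS : Nat.card {π : Fin (n - k) → Set {i : ℕ // 2 ≤ i ∧ i ≤ n - 1} //
      (∀ j, (π j).Nonempty) ∧ (∀ j j', j ≠ j' → Disjoint (π j) (π j')) ∧
        (⋃ j, π j) = Set.univ} = Sur (n - 2) (n - k) := by
    have hbij : Bijective (fun f : {f : {i : ℕ // 2 ≤ i ∧ i ≤ n - 1} → Fin (n - k) // Surjective f} =>
        (⟨fun j => f.1 ⁻¹' {j}, fun j => by
            obtain ⟨x, hx⟩ := f.2 j
            exact ⟨x, hx⟩,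
          fun j j' hjj' => Set.disjoint_left.mpr (fun x hx hx' => hjj' (hx ▸ hx'.symm ▸ rfl)),
          by
            ext x
            simp only [Set.mem_iUnion, Set.mem_univ, iff_true]
            exact ⟨f.1 x, rfl⟩⟩ :
          {π : Fin (n - k) → Set {i : ℕ // 2 ≤ i ∧ i ≤ n - 1} //
            (∀ j, (π j).Nonempty) ∧ (∀ j j', j ≠ j' → Disjoint (π j) (π j')) ∧
              (⋃ j, π j) = Set.univ})) := by
      constructor
      · rintro ⟨f, hf⟩ ⟨g, hg⟩ h
        have h2 : ∀ j, f ⁻¹' ({j} : Set (Fin (n - k))) = g ⁻¹' {j} :=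
          fun j => congrFun (congrArg Subtype.val h) j
        refine Subtype.ext (funext fun x => ?_)
        have : x ∈ g ⁻¹' {f x} := (h2 (f x)) ▸ (rfl : x ∈ f ⁻¹' {f x})
        exact this.symm
      · rintro ⟨π, hne, hdis, hcov⟩
        have hex : ∀ x : {i : ℕ // 2 ≤ i ∧ i ≤ n - 1}, ∃ j, x ∈ π j := by
          intro x
          have : x ∈ ⋃ j, π j := hcov ▸ Set.mem_univ x
          exact Set.mem_iUnion.mp this
        choose f hf using hex
        have huniq : ∀ x j, x ∈ π j → f x = j := by
          intro x j hj
          by_contra hne'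
          exact Set.disjoint_left.mp (hdis _ _ hne') (hf x) hj
        refine ⟨⟨f, fun j => ?_⟩, ?_⟩
        · obtain ⟨x, hx⟩ := hne j
          exact ⟨x, huniq x j hx⟩
        · refine Subtype.ext (funext fun j => ?_)
          ext x
          constructor
          · intro hx
            exact (hx : f x = j) ▸ hf x
          · intro hx
            exact huniq x j hx
    rw [← Nat.card_eq_of_bijective _ hbij]
    exact sur_card hcardS (Fintype.card_fin _)
  have hfin1 : Finite {G : SimpleGraph (Fin n) //
      G.IsTree ∧ ∀ i, ((G.neighborSet i).ncard = 1 ↔ i ∈ L)} := inferInstance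
  have hfin2 : Finite {π : Fin (n - k) → Set {i : ℕ // 2 ≤ i ∧ i ≤ n - 1} //
      (∀ j, (π j).Nonempty) ∧ (∀ j j', j ≠ j' → Disjoint (π j) (π j')) ∧
        (⋃ j, π j) = Set.univ} := inferInstance
  haveI := Fintype.ofFinite {G : SimpleGraph (Fin n) //
      G.IsTree ∧ ∀ i, ((G.neighborSet i).ncard = 1 ↔ i ∈ L)}
  haveI := Fintype.ofFinite {π : Fin (n - k) → Set {i : ℕ // 2 ≤ i ∧ i ≤ n - 1} //
      (∀ j, (π j).Nonempty) ∧ (∀ j j', j ≠ j' → Disjoint (π j) (π j')) ∧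
        (⋃ j, π j) = Set.univ}
  refine ⟨Fintype.equivOfCardEq ?_⟩
  rw [← Nat.card_eq_fintype_card, ← Nat.card_eq_fintype_card, hLHS, hRHS]

end
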